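/- In a two-sided matching instance where all agents have quantile parameter h_i = 0, any stable lottery that is efficient must be integral, i.e., it coincides with a single deterministic stable matching. -/

import Mathlib

open scoped Classical
open Finset

/-- Total probability mass of options strictly worse than `o` under strict preference `p`
(`p u v` means `u` is strictly preferred to `v`). -/
noncomputable def sWorse {O : Type*} [Fintype O] (x : O → ℝ) (p : O → O → Prop) (o : O) : ℝ :=
  ∑ o' ∈ univ.filter (fun o' => p o o'), x o'

/-- Total probability mass of options weakly worse than `o`. -/
noncomputable def wWorse {O : Type*} [Fintype O] (x : O → ℝ) (p : O → O → Prop) (o : O) : ℝ :=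
  ∑ o' ∈ univ.filter (fun o' => p o o' ∨ o' = o), x o'

/-- `x` is a lottery (probability distribution) over the finite set of options. -/
def IsLottery {O : Type*} [Fintype O] (x : O → ℝ) : Prop :=
  (∀ o, 0 ≤ x o) ∧ ∑ o, x o = 1

/-- `o` is the `h`-quantile representative of lottery `x` with respect to strict preference `p`:
for `h = 1` it is the most preferred option with positive probability; for `h < 1` it is the
option whose strictly-worse mass is at most `h` while its weakly-worse mass exceeds `h`. -/
def IsRep {O : Type*} [Fintype O] (x : O → ℝ) (p : O → O → Prop) (h : ℝ) (o : O) : Prop :=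
  (h = 1 ∧ 0 < x o ∧ ∀ o', p o' o → x o' = 0) ∨
  (h < 1 ∧ sWorse x p o ≤ h ∧ h < wWorse x p o)

/-- A doubly stochastic lottery over two-sided matchings. -/
def IsDS {N M : Type*} [Fintype N] [Fintype M] (x : N → M → ℝ) : Prop :=
  (∀ i g, 0 ≤ x i g) ∧ (∀ i, ∑ g, x i g = 1) ∧ (∀ g, ∑ i, x i g = 1)

/-- Stability of a lottery over two-sided matchings: no blocking pair with respect to
quantile representatives. -/
def TwoStable {N M : Type*} [Fintype N] [Fintype M]
    (pN : N → M → M → Prop) (pM : M → N → N → Prop) (hN : N → ℝ) (hM : M → ℝ)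
    (x : N → M → ℝ) : Prop :=
  ∀ i j u v, IsRep (x i) (pN i) (hN i) u → IsRep (fun k => x k j) (pM j) (hM j) v →
    ((pN i u j ∨ u = j) ∨ (pM j v i ∨ v = i))

/-- Lottery `y` Pareto dominates lottery `x` with respect to the quantile representatives of
all agents on both sides. -/
def TwoDom {N M : Type*} [Fintype N] [Fintype M]
    (pN : N → M → M → Prop) (pM : M → N → N → Prop) (hN : N → ℝ) (hM : M → ℝ)
    (y x : N → M → ℝ) : Prop :=
  (∀ i u v, IsRep (y i) (pN i) (hN i) u → IsRep (x i) (pN i) (hN i) v →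
    (pN i u v ∨ u = v)) ∧
  (∀ j u v, IsRep (fun k => y k j) (pM j) (hM j) u →
    IsRep (fun k => x k j) (pM j) (hM j) v → (pM j u v ∨ u = v)) ∧
  ((∃ i u v, IsRep (y i) (pN i) (hN i) u ∧ IsRep (x i) (pN i) (hN i) v ∧ pN i u v) ∨
   (∃ j u v, IsRep (fun k => y k j) (pM j) (hM j) u ∧
      IsRep (fun k => x k j) (pM j) (hM j) v ∧ pM j u v))

/-- Integral stability of a perfect matching `μ`. -/
def IntStable {N M : Type*} (pN : N → M → M → Prop) (pM : M → N → N → Prop)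
    (μ : N ≃ M) : Prop :=
  ∀ i j, ¬ (pN i j (μ i) ∧ pM j i (μ.symm j))

section Aux
variable {O : Type*} [Fintype O] {p : O → O → Prop}

lemma sto_trich (hp : IsStrictTotalOrder O p) (a b : O) : p a b ∨ a = b ∨ p b a :=
  by
    by_cases h1 : p a b
    · exact Or.inl h1
    by_cases h2 : p b a
    · exact Or.inr (Or.inr h2)
    exact Or.inr (Or.inl (hp.trichotomous a b h1 h2))

lemma sto_irrefl (hp : IsStrictTotalOrder O p) (a : O) : ¬ p a a :=
  hp.toIsStrictOrder.toIrrefl.irrefl a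

lemma sto_asymm (hp : IsStrictTotalOrder O p) {a b : O} (h1 : p a b) (h2 : p b a) : False :=
  sto_irrefl hp a (hp.toIsStrictOrder.toIsTrans.trans a b a h1 h2)

lemma isRep_zero_iff (hp : IsStrictTotalOrder O p) {x : O → ℝ}
    (hx0 : ∀ o, 0 ≤ x o) (o : O) :
    IsRep x p 0 o ↔ (0 < x o ∧ ∀ o', p o o' → x o' = 0) := by
  have hirr : ¬ p o o := sto_irrefl hp o
  have hw : wWorse x p o = x o + sWorse x p o := by
    unfold wWorse sWorse
    have hset : univ.filter (fun o' => p o o' ∨ o' = o)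
        = insert o (univ.filter (fun o' => p o o')) := by
      ext o'
      simp only [mem_filter, mem_univ, true_and, mem_insert]
      tauto
    rw [hset, Finset.sum_insert (by simp [hirr])]
  constructor
  · rintro (⟨h1, _⟩ | ⟨_, hs, hwlt⟩)
    · exact absurd h1 (by norm_num)
    · have hzero : sWorse x p o = 0 :=
        le_antisymm hs (Finset.sum_nonneg fun o' _ => hx0 o')
      refine ⟨by rw [hw, hzero, add_zero] at hwlt; exact hwlt, ?_⟩
      intro o' ho'
      have hall := (Finset.sum_eq_zero_iff_of_nonneg (fun o' _ => hx0 o')).mp hzero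
      exact hall o' (by simp [ho'])
  · rintro ⟨h1, h2⟩
    right
    have hzero : sWorse x p o = 0 :=
      Finset.sum_eq_zero (fun o' ho' => h2 o' (by simpa using ho'))
    exact ⟨by norm_num, le_of_eq hzero, by rw [hw, hzero, add_zero]; exact h1⟩

lemma exists_min (hp : IsStrictTotalOrder O p) {x : O → ℝ}
    (hx0 : ∀ o, 0 ≤ x o) (hx1 : ∑ o, x o = 1) :
    ∃ o, 0 < x o ∧ ∀ o', p o o' → x o' = 0 := by
  haveI : IsTrans O (fun a b => p b a) :=
    ⟨fun a b c h1 h2 => hp.toIsStrictOrder.toIsTrans.trans c b a h2 h1⟩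
  haveI : IsIrrefl O (fun a b => p b a) := ⟨fun a h => sto_irrefl hp a h⟩
  have hwf : WellFounded (fun a b : O => p b a) :=
    Finite.wellFounded_of_trans_of_irrefl _
  have hne : ({o | 0 < x o} : Set O).Nonempty := by
    by_contra h
    rw [Set.not_nonempty_iff_eq_empty] at h
    have hz : ∑ o, x o = 0 := Finset.sum_eq_zero (fun o _ => by
      have ho : o ∉ ({o | 0 < x o} : Set O) := by rw [h]; exact Set.notMem_empty o
      simp only [Set.mem_setOf_eq, not_lt] at ho
      exact le_antisymm ho (hx0 o))
    rw [hx1] at hz; norm_num at hz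
  obtain ⟨m, hm, hmin⟩ := hwf.has_min {o | 0 < x o} hne
  refine ⟨m, hm, fun o' ho' => ?_⟩
  by_contra h0
  exact hmin o' ((hx0 o').lt_of_ne (Ne.symm h0)) ho'

lemma min_unique (hp : IsStrictTotalOrder O p) {x : O → ℝ} {o1 o2 : O}
    (h1 : 0 < x o1 ∧ ∀ o', p o1 o' → x o' = 0)
    (h2 : 0 < x o2 ∧ ∀ o', p o2 o' → x o' = 0) : o1 = o2 := by
  rcases sto_trich hp o1 o2 with h | h | h
  · exact absurd (h1.2 o2 h) (ne_of_gt h2.1)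
  · exact h
  · exact absurd (h2.2 o1 h) (ne_of_gt h1.1)

lemma exists_max (hp : IsStrictTotalOrder O p) {x : O → ℝ}
    (hx0 : ∀ o, 0 ≤ x o) (hx1 : ∑ o, x o = 1) :
    ∃ o, 0 < x o ∧ ∀ o', p o' o → x o' = 0 := by
  have hp' : IsStrictTotalOrder O (fun a b => p b a) :=
    { trichotomous := fun a b => by
        exact fun h1 h2 => hp.trichotomous a b h2 h1
      irrefl := fun a h => sto_irrefl hp a h
      trans := fun a b c h1 h2 => hp.toIsStrictOrder.toIsTrans.trans c b a h2 h1 }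
  exact exists_min hp' hx0 hx1
end Aux

/-- When all quantile parameters are 0, any stable lottery that is efficient must be
integral, i.e., it coincides with a single deterministic stable matching. -/
theorem stmt17 {N M : Type*} [Fintype N] [Fintype M]
    (hcard : Fintype.card N = Fintype.card M)
    (pN : N → M → M → Prop) (pM : M → N → N → Prop)
    (hpN : ∀ i, IsStrictTotalOrder M (pN i)) (hpM : ∀ j, IsStrictTotalOrder N (pM j))
    (x : N → M → ℝ) (hx : IsDS x)
    (hstab : TwoStable pN pM (fun _ => 0) (fun _ => 0) x)
    (heff : ¬ ∃ y : N → M → ℝ, IsDS y ∧ TwoDom pN pM (fun _ => 0) (fun _ => 0) y x) :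
    ∃ μ : N ≃ M, (∀ i j, x i j = if μ i = j then 1 else 0) ∧ IntStable pN pM μ := by
  obtain ⟨hx0, hrow, hcol⟩ := hx
  -- reps: u i = worst positive woman for man i, v j = worst positive man for woman j,
  -- b j = best positive man for woman j
  choose u hu1 hu2 using fun i => exists_min (hpN i) (fun o => hx0 i o) (hrow i)
  choose v hv1 hv2 using fun j =>
    exists_min (hpM j) (x := fun k => x k j) (fun k => hx0 k j) (hcol j)
  choose b hb1 hb2 using fun j =>
    exists_max (hpM j) (x := fun k => x k j) (fun k => hx0 k j) (hcol j)
  have hurep : ∀ i, IsRep (x i) (pN i) 0 (u i) :=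
    fun i => (isRep_zero_iff (hpN i) (fun o => hx0 i o) (u i)).mpr ⟨hu1 i, hu2 i⟩
  have hvrep : ∀ j, IsRep (fun k => x k j) (pM j) 0 (v j) :=
    fun j => (isRep_zero_iff (hpM j) (x := fun k => x k j) (fun k => hx0 k j) (v j)).mpr
      ⟨hv1 j, hv2 j⟩
  -- unpacked stability
  have hst : ∀ i j, (pN i (u i) j ∨ u i = j) ∨ (pM j (v j) i ∨ v j = i) :=
    fun i j => hstab i j (u i) (v j) (hurep i) (hvrep j)
  -- support lemma
  have hsup : ∀ i j, 0 < x i j → j = u i ∨ i = v j := by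
    intro i j hpos
    by_contra hc
    push_neg at hc
    obtain ⟨hju, hiv⟩ := hc
    have h1 : pN i j (u i) := by
      rcases sto_trich (hpN i) j (u i) with h | h | h
      · exact h
      · exact absurd h hju
      · exact absurd (hu2 i j h) (ne_of_gt hpos)
    have h2 : pM j i (v j) := by
      rcases sto_trich (hpM j) i (v j) with h | h | h
      · exact h
      · exact absurd h hiv
      · exact absurd (hv2 j i h) (ne_of_gt hpos)
    rcases hst i j with (h | h) | (h | h)
    · exact sto_asymm (hpN i) h h1
    · exact hju h.symm
    · exact sto_asymm (hpM j) h h2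
    · exact hiv h.symm
  -- single-column lemma: if best = worst in column j then column is a point mass at b j
  have hcolzero : ∀ j, b j = v j → ∀ k, k ≠ b j → x k j = 0 := by
    intro j hbv k hk
    by_contra h0
    have hkpos : 0 < x k j := (hx0 k j).lt_of_ne (Ne.symm h0)
    rcases sto_trich (hpM j) k (b j) with h | h | h
    · exact h0 (hb2 j k h)
    · exact hk h
    · rw [hbv] at h; exact h0 (hv2 j k h)
  have hcolone : ∀ j, b j = v j → x (b j) j = 1 := by
    intro j hbv
    have := hcol j
    rwa [Finset.sum_eq_single (b j) (fun k _ hk => hcolzero j hbv k hk)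
      (fun h => absurd (mem_univ (b j)) h)] at this
  -- Claim 1 : u (b j) = j
  have hub : ∀ j, u (b j) = j := by
    intro j
    by_contra hne
    have hpos := hb1 j
    have hbv : b j = v j := by
      rcases hsup (b j) j hpos with h | h
      · exact absurd h.symm hne
      · exact h
    have hone := hcolone j hbv
    have hrz : ∀ j', j' ≠ j → x (b j) j' = 0 := by
      intro j' hj'
      have hsum := hrow (b j)
      have h1 : ∑ j'' ∈ univ.erase j, x (b j) j'' = 0 := by
        have h2 := Finset.add_sum_erase univ (fun j'' => x (b j) j'') (mem_univ j)
        rw [hsum, hone] at h2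
        linarith
      have := (Finset.sum_eq_zero_iff_of_nonneg
        (fun j'' _ => hx0 (b j) j'')).mp h1
      exact this j' (Finset.mem_erase.mpr ⟨hj', mem_univ j'⟩)
    exact absurd (hrz (u (b j)) hne) (ne_of_gt (hu1 (b j)))
  -- u is bijective
  have hsurj : Function.Surjective u := fun j => ⟨b j, hub j⟩
  have hbij : Function.Bijective u :=
    (Fintype.bijective_iff_surjective_and_card u).mpr ⟨hsurj, hcard⟩
  let e : N ≃ M := Equiv.ofBijective u hbij
  have he : ∀ i, e i = u i := fun i => rfl
  have hbe : ∀ j, b j = e.symm j := by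
    intro j
    apply hbij.injective
    rw [hub j]
    have : u (e.symm j) = e (e.symm j) := (he _).symm
    rw [this, e.apply_symm_apply]
  -- efficiency forces v = b
  have hvb : ∀ j, v j = b j := by
    by_contra hC
    push_neg at hC
    obtain ⟨j0, hj0⟩ := hC
    apply heff
    set y : N → M → ℝ := fun i j => if e i = j then 1 else 0 with hy
    have hyval : ∀ i j, y i j = if e i = j then 1 else 0 := fun i j => rfl
    have hy0 : ∀ i j, 0 ≤ y i j := by
      intro i j; rw [hyval]; split <;> norm_num
    have hyz : ∀ i j, e i ≠ j → y i j = 0 := by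
      intro i j h; rw [hyval, if_neg h]
    have hyii : ∀ i, y i (e i) = 1 := by
      intro i; rw [hyval, if_pos rfl]
    have hyjj : ∀ j, y (e.symm j) j = 1 := by
      intro j; rw [hyval, if_pos (e.apply_symm_apply j)]
    have hyN : ∀ i, IsRep (y i) (pN i) 0 (e i) := fun i =>
      (isRep_zero_iff (hpN i) (fun o => hy0 i o) (e i)).mpr
        ⟨by rw [hyii]; norm_num,
         fun o' ho' => hyz i o' (fun h => sto_irrefl (hpN i) (e i) (h ▸ ho'))⟩
    have hyM : ∀ j, IsRep (fun k => y k j) (pM j) 0 (e.symm j) := fun j =>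
      (isRep_zero_iff (hpM j) (x := fun k => y k j) (fun k => hy0 k j) (e.symm j)).mpr
        ⟨by rw [hyjj]; norm_num,
         fun k' hk' => hyz k' j (fun h => sto_irrefl (hpM j) (e.symm j)
           (by rw [show k' = e.symm j from by rw [← h, Equiv.symm_apply_apply]] at hk'; exact hk'))⟩
    have hdomM : ∀ j, v j ≠ b j → pM j (b j) (v j) := by
      intro j hne
      rcases sto_trich (hpM j) (b j) (v j) with h | h | h
      · exact h
      · exact absurd h.symm hne
      · exact absurd (hb2 j (v j) h) (ne_of_gt (hv1 j))
    refine ⟨y, ⟨fun i j => hy0 i j, ?_, ?_⟩, ?_, ?_, ?_⟩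
    · intro i
      rw [Finset.sum_eq_single (e i) (fun j _ hj => hyz i j (fun h => hj h.symm))
        (fun h => absurd (mem_univ (e i)) h)]
      exact hyii i
    · intro j
      rw [Finset.sum_eq_single (e.symm j)
        (fun k _ hk => hyz k j (fun h => hk (by rw [← h, Equiv.symm_apply_apply])))
        (fun h => absurd (mem_univ (e.symm j)) h)]
      exact hyjj j
    · intro i u' v' h1 h2
      right
      have hu' : u' = e i := min_unique (hpN i)
        ((isRep_zero_iff (hpN i) (fun o => hy0 i o) u').mp h1)
        ((isRep_zero_iff (hpN i) (fun o => hy0 i o) (e i)).mp (hyN i))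
      have hv' : v' = u i := min_unique (hpN i)
        ((isRep_zero_iff (hpN i) (fun o => hx0 i o) v').mp h2)
        ⟨hu1 i, hu2 i⟩
      rw [hu', hv', he]
    · intro j u' v' h1 h2
      have hu' : u' = e.symm j := min_unique (hpM j) (x := fun k => y k j)
        ((isRep_zero_iff (hpM j) (x := fun k => y k j) (fun k => hy0 k j) u').mp h1)
        ((isRep_zero_iff (hpM j) (x := fun k => y k j) (fun k => hy0 k j) (e.symm j)).mp (hyM j))
      have hv' : v' = v j := min_unique (hpM j) (x := fun k => x k j)
        ((isRep_zero_iff (hpM j) (x := fun k => x k j) (fun k => hx0 k j) v').mp h2)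
        ⟨hv1 j, hv2 j⟩
      by_cases hne : v j = b j
      · right; rw [hu', hv', ← hbe, hne]
      · left; rw [hu', hv', ← hbe]; exact hdomM j hne
    · right
      exact ⟨j0, e.symm j0, v j0, hyM j0, hvrep j0, by rw [← hbe]; exact hdomM j0 hj0⟩
  -- conclude: x is the permutation matrix of e
  refine ⟨e, ?_, ?_⟩
  · intro i j
    by_cases hij : e i = j
    · have hib : i = b j := by rw [hbe, ← hij, Equiv.symm_apply_apply]
      rw [if_pos hij, hib]
      exact hcolone j (hvb j).symm
    · rw [if_neg hij]
      apply hcolzero j (hvb j).symm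
      intro h
      exact hij (by rw [h, hbe, Equiv.apply_symm_apply])
  · intro i j ⟨h1, h2⟩
    have hei : (e : N ≃ M) i = u i := he i
    have hsym : e.symm j = v j := by rw [← hbe, hvb]
    rw [hei] at h1
    rw [hsym] at h2
    rcases hst i j with (h | h) | (h | h)
    · exact sto_asymm (hpN i) h h1
    · rw [h] at h1; exact sto_irrefl (hpN i) j h1
    · exact sto_asymm (hpM j) h h2
    · rw [h] at h2; exact sto_irrefl (hpM j) i h2
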